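/- In K = Q(√2,√3), the element ζ = 3 − (1/2)√2 − √3 + (1/2)√6 is a totally positive algebraic integer of K, has norm 25, and is indecomposable in O_K. -/

import Mathlib

/-- The four real embeddings of the biquadratic field `Q(√p,√q)` applied to the element
`a + b√p + c√q + d√r` (given by the quadruple `v = (a,b,c,d)` of rationals); the signs
`s, t ∈ {1,-1}` determine the embedding: `√p ↦ s√p`, `√q ↦ t√q`, `√r ↦ st√r`. -/
noncomputable def emb (p q r : ℕ) (s t : ℤ) (v : ℚ × ℚ × ℚ × ℚ) : ℝ :=
  (v.1 : ℝ) + (s : ℝ) * (v.2.1 : ℝ) * Real.sqrt p + (t : ℝ) * (v.2.2.1 : ℝ) * Real.sqrt q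
    + (s : ℝ) * (t : ℝ) * (v.2.2.2 : ℝ) * Real.sqrt r

/-- The possible signs. -/
def Sgn : Set ℤ := {1, -1}

/-- Total positivity: all four embeddings are positive. -/
def TotPos (p q r : ℕ) (v : ℚ × ℚ × ℚ × ℚ) : Prop :=
  ∀ s ∈ Sgn, ∀ t ∈ Sgn, 0 < emb p q r s t v

/-- Membership in the ring of integers of `Q(√p,√q)`. -/
def IsIntK (p q r : ℕ) (v : ℚ × ℚ × ℚ × ℚ) : Prop :=
  IsIntegral ℤ (emb p q r 1 1 v)

/-- Indecomposability: totally positive and not a sum of two totally positive integers. -/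
def Indec (p q r : ℕ) (v : ℚ × ℚ × ℚ × ℚ) : Prop :=
  TotPos p q r v ∧ IsIntK p q r v ∧
    ¬ ∃ β γ : ℚ × ℚ × ℚ × ℚ, IsIntK p q r β ∧ IsIntK p q r γ ∧
      TotPos p q r β ∧ TotPos p q r γ ∧ β + γ = v


open Polynomial Real


-- basic sqrt facts
lemma sq2 : Real.sqrt 2 ^ 2 = 2 := Real.sq_sqrt (by norm_num)
lemma sq3 : Real.sqrt 3 ^ 2 = 3 := Real.sq_sqrt (by norm_num)
lemma sq6 : Real.sqrt 6 ^ 2 = 6 := Real.sq_sqrt (by norm_num)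
lemma s6eq : Real.sqrt 6 = Real.sqrt 2 * Real.sqrt 3 := by
  rw [show (6:ℝ) = 2*3 by norm_num, Real.sqrt_mul (by norm_num)]

lemma s2lb : (1.414:ℝ) < Real.sqrt 2 := by
  nlinarith [sq2, Real.sqrt_nonneg 2]
lemma s2ub : Real.sqrt 2 < 1.415 := by
  nlinarith [sq2, Real.sqrt_nonneg 2]
lemma s3lb : (1.732:ℝ) < Real.sqrt 3 := by
  nlinarith [sq3, Real.sqrt_nonneg 3]
lemma s3ub : Real.sqrt 3 < 1.733 := by
  nlinarith [sq3, Real.sqrt_nonneg 3]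
lemma s6lb : (2.449:ℝ) < Real.sqrt 6 := by
  nlinarith [sq6, Real.sqrt_nonneg 6]
lemma s6ub : Real.sqrt 6 < 2.4495 := by
  nlinarith [sq6, Real.sqrt_nonneg 6]



lemma rat_sq_ne (q : ℚ) (n : ℕ) (hirr : Irrational (Real.sqrt n)) : q^2 ≠ (n:ℚ) := by
  intro h
  have h2 : ((q:ℝ))^2 = (n:ℝ) := by exact_mod_cast congrArg (Rat.cast : ℚ → ℝ) h
  have : Real.sqrt n = |(q:ℝ)| := by
    rw [← sq_abs] at h2
    rw [← h2, Real.sqrt_sq (abs_nonneg _)]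
  rw [← Rat.cast_abs] at this
  exact hirr ⟨|q|, this.symm⟩

lemma irr6 : Irrational (Real.sqrt 6) := by
  rw [show ((6:ℝ) = ((6:ℕ):ℝ)) by norm_num, irrational_sqrt_natCast_iff]
  rintro ⟨m, hm⟩
  rcases Nat.lt_or_ge m 3 with h | h
  · interval_cases m <;> omega
  · nlinarith

noncomputable section

def f2 : ℚ[X] := X^2 - C 2

lemma f2_irr : Irreducible f2 := by
  apply X_pow_sub_C_irreducible_of_prime Nat.prime_two
  intro b
  have := rat_sq_ne b 2 (by rw [show ((2:ℕ):ℝ) = 2 by norm_num]; exact irrational_sqrt_two)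
  simpa using this

instance : Fact (Irreducible f2) := ⟨f2_irr⟩

abbrev A2 := AdjoinRoot f2

/-- evaluation hom A2 → ℝ sending root to u with u^2 = 2 -/
def evA (u : ℝ) (hu : u^2 = 2) : A2 →+* ℝ :=
  AdjoinRoot.lift (algebraMap ℚ ℝ) u (by
    simp [f2, hu])

lemma evA_repr (u : ℝ) (hu : u^2 = 2) (z : A2) : ∃ p q : ℚ, evA u hu z = p + q * u := by
  obtain ⟨g, rfl⟩ := AdjoinRoot.mk_surjective z
  refine ⟨(g %ₘ f2).coeff 0, (g %ₘ f2).coeff 1, ?_⟩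
  have hmon : f2.Monic := by
    apply monic_X_pow_sub_C; norm_num
  have hdeg : (g %ₘ f2).degree < 2 := by
    have := degree_modByMonic_lt g hmon
    simpa [f2, degree_X_pow_sub_C] using this
  have hrepr : g %ₘ f2 = C ((g %ₘ f2).coeff 1) * X + C ((g %ₘ f2).coeff 0) := by
    refine Polynomial.eq_X_add_C_of_degree_le_one ?_
    rw [show (2 : WithBot ℕ) = 1 + 1 by rfl] at hdeg
    exact Order.le_of_lt_succ hdeg
  have hmod : AdjoinRoot.mk f2 g = AdjoinRoot.mk f2 (g %ₘ f2) := by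
    rw [Polynomial.modByMonic_eq_sub_mul_div g f2, map_sub, map_mul, AdjoinRoot.mk_self]
    ring
  rw [hmod, evA, AdjoinRoot.lift_mk]
  conv_lhs => rw [hrepr]
  rw [eval₂_add, eval₂_mul, eval₂_C, eval₂_X, eval₂_C]
  show ((g %ₘ f2).coeff 1 : ℝ) * u + ((g %ₘ f2).coeff 0 : ℝ) = _
  ring

lemma not_isSquare_three_A2 : ¬ IsSquare (3 : A2) := by
  rintro ⟨z, hz⟩
  set ev := evA (Real.sqrt 2) (Real.sq_sqrt (by norm_num)) with hev
  have h3 : ev 3 = 3 := by simp [map_ofNat]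
  obtain ⟨p, q, hz'⟩ := evA_repr (Real.sqrt 2) (Real.sq_sqrt (by norm_num)) z
  have : (3:ℝ) = (p + q * Real.sqrt 2)^2 := by
    rw [← hz']
    rw [hz] at h3
    rw [← h3, map_mul, sq]
  have hsq2 : Real.sqrt 2 ^ 2 = 2 := Real.sq_sqrt (by norm_num)
  have hexp : (3:ℝ) = p^2 + 2*q^2 + (2*p*q) * Real.sqrt 2 := by
    rw [this]; ring_nf; nlinarith [hsq2]
  have hpq : p * q = 0 := by
    by_contra hne
    have heq : ((2*p*q:ℚ):ℝ) * Real.sqrt 2 = ((3 - p^2 - 2*q^2 : ℚ):ℝ) := by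
      push_cast; linarith [hexp]
    have hirr := irrational_sqrt_two.ratCast_mul (q := 2*p*q) (by
      intro h; apply hne; nlinarith [h])
    rw [heq] at hirr
    exact (3 - p^2 - 2*q^2).not_irrational hirr
  rcases mul_eq_zero.1 hpq with h|h
  · -- p = 0 : 2 q^2 = 3, so (2q)^2 = 6
    have h6 : ((2*q)^2 : ℚ) = 6 := by
      have : (3:ℝ) = 2*(q:ℝ)^2 := by rw [hexp, h]; push_cast; ring
      have : (2*(q:ℚ)^2 : ℚ) = 3 := by exact_mod_cast this.symm
      nlinarith [this]
    exact rat_sq_ne (2*q) 6 (by rw [show ((6:ℕ):ℝ) = 6 by norm_num]; exact irr6) (by exact_mod_cast h6)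
  · have h3' : ((p)^2 : ℚ) = 3 := by
      have : (3:ℝ) = (p:ℝ)^2 := by rw [hexp, h]; push_cast; ring
      exact_mod_cast this.symm
    exact rat_sq_ne p 3 (by rw [show ((3:ℕ):ℝ) = 3 by norm_num]; exact (Nat.prime_three).irrational_sqrt) h3'

end

noncomputable section
open AdjoinRoot
set_option synthInstance.maxHeartbeats 1000000

def f3 : A2[X] := X^2 - C 3

lemma f3_irr : Irreducible f3 := by
  apply X_pow_sub_C_irreducible_of_prime Nat.prime_two
  intro b hb
  exact not_isSquare_three_A2 ⟨b, by rw [← hb]; ring⟩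

instance : Fact (Irreducible f3) := ⟨f3_irr⟩

abbrev BB := AdjoinRoot f3

/-- evaluation hom BB → ℝ -/
def evB (u w : ℝ) (hu : u^2 = 2) (hw : w^2 = 3) : BB →+* ℝ :=
  AdjoinRoot.lift (evA u hu) w (by
    simp [f3, hw, map_ofNat])

/-- the element a + b√2 + c√3 + d√6 inside BB -/
def xi (v : ℚ × ℚ × ℚ × ℚ) : BB :=
  (AdjoinRoot.of f3) ((AdjoinRoot.of f2) v.1 + (AdjoinRoot.of f2) v.2.1 * root f2)
    + ((AdjoinRoot.of f3) ((AdjoinRoot.of f2) v.2.2.1 + (AdjoinRoot.of f2) v.2.2.2 * root f2)) * root f3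

lemma evB_xi (u w : ℝ) (hu : u^2 = 2) (hw : w^2 = 3) (v : ℚ × ℚ × ℚ × ℚ) :
    evB u w hu hw (xi v) = (v.1:ℝ) + (v.2.1:ℝ) * u + (v.2.2.1:ℝ) * w + (v.2.2.2:ℝ) * (u*w) := by
  simp only [xi, map_add, map_mul, evB, AdjoinRoot.lift_of, AdjoinRoot.lift_root, evA, eq_ratCast, map_ratCast]
  ring

lemma conj_integral (u w : ℝ) (hu : u^2 = 2) (hw : w^2 = 3) (v : ℚ × ℚ × ℚ × ℚ)
    (hint : IsIntegral ℤ ((v.1:ℝ) + (v.2.1:ℝ) * Real.sqrt 2 + (v.2.2.1:ℝ) * Real.sqrt 3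
      + (v.2.2.2:ℝ) * (Real.sqrt 2 * Real.sqrt 3))) :
    IsIntegral ℤ ((v.1:ℝ) + (v.2.1:ℝ) * u + (v.2.2.1:ℝ) * w + (v.2.2.2:ℝ) * (u*w)) := by
  have hs2 : Real.sqrt 2 ^ 2 = 2 := Real.sq_sqrt (by norm_num)
  have hs3 : Real.sqrt 3 ^ 2 = 3 := Real.sq_sqrt (by norm_num)
  obtain ⟨P, hPm, hP⟩ := hint
  rw [← evB_xi (Real.sqrt 2) (Real.sqrt 3) hs2 hs3 v] at hP
  have hzero : Polynomial.eval₂ (algebraMap ℤ BB) (xi v) P = 0 := by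
    apply (evB (Real.sqrt 2) (Real.sqrt 3) hs2 hs3).injective
    rw [map_zero, Polynomial.hom_eval₂]
    rw [Subsingleton.elim ((evB (Real.sqrt 2) (Real.sqrt 3) hs2 hs3).comp (algebraMap ℤ BB)) (algebraMap ℤ ℝ)]
    exact hP
  refine ⟨P, hPm, ?_⟩
  rw [← evB_xi u w hu hw v,
    Subsingleton.elim (algebraMap ℤ ℝ) ((evB u w hu hw).comp (algebraMap ℤ BB)),
    ← Polynomial.hom_eval₂, hzero, map_zero]

end

lemma sq_mod4 (A : ℤ) : ∃ m, (A % 2 = 0 ∧ A^2 = 4*m) ∨ (A % 2 = 1 ∧ A^2 = 4*m+1) := by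
  rcases Int.even_or_odd A with ⟨k,hk⟩|⟨k,hk⟩
  · exact ⟨k*k, Or.inl ⟨by omega, by rw [hk]; ring⟩⟩
  · exact ⟨k*k+k, Or.inr ⟨by omega, by rw [hk]; ring⟩⟩

lemma even_of_sq (n P Q N : ℤ) (hn : n = 2 ∨ n = 3 ∨ n = 6) (h : P^2 - n*Q^2 = 4*N) :
    P % 2 = 0 ∧ Q % 2 = 0 := by
  obtain ⟨mp, hp⟩ := sq_mod4 P
  obtain ⟨mq, hq⟩ := sq_mod4 Q
  rcases hp with ⟨h1,h2⟩|⟨h1,h2⟩ <;> rcases hq with ⟨h3,h4⟩|⟨h3,h4⟩ <;>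
    rw [h2, h4] at h <;> rcases hn with rfl|rfl|rfl <;> omega

lemma rat_int (x : ℚ) (h : IsIntegral ℤ ((x:ℝ))) : ∃ z : ℤ, (z:ℚ) = x := by
  have : IsIntegral ℤ x := by
    rw [show ((x:ℝ)) = algebraMap ℚ ℝ x from (eq_ratCast _ _).symm] at h
    exact (isIntegral_algebraMap_iff (algebraMap ℚ ℝ).injective).mp h
  obtain ⟨y, hy⟩ := IsIntegrallyClosed.isIntegral_iff.mp this
  exact ⟨y, hy⟩

lemma sqrt_int (n : ℕ) : IsIntegral ℤ (Real.sqrt n) := by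
  refine ⟨Polynomial.X^2 - Polynomial.C (n:ℤ), ?_, ?_⟩
  · apply Polynomial.monic_X_pow_sub_C; norm_num
  · simp [Real.sq_sqrt (by positivity : (0:ℝ) ≤ (n:ℕ))]

lemma quadInt (n : ℕ) (hn : (n:ℤ) = 2 ∨ (n:ℤ) = 3 ∨ (n:ℤ) = 6) (p q : ℚ)
    (h1 : IsIntegral ℤ ((p:ℝ) + (q:ℝ) * Real.sqrt n))
    (h2 : IsIntegral ℤ ((p:ℝ) - (q:ℝ) * Real.sqrt n)) :
    ∃ P Q : ℤ, ((P:ℚ)) = p ∧ ((Q:ℚ)) = q := by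
  have hn0 : (0:ℝ) ≤ (n:ℝ) := by positivity
  have hs : Real.sqrt n ^ 2 = n := Real.sq_sqrt hn0
  -- 2p is an integer
  obtain ⟨z1, hz1⟩ : ∃ z : ℤ, (z:ℚ) = 2*p := by
    apply rat_int
    have := h1.add h2
    rw [show (p:ℝ) + (q:ℝ) * Real.sqrt n + ((p:ℝ) - (q:ℝ) * Real.sqrt n) = ((2*p : ℚ):ℝ) by
      push_cast; ring] at this
    exact this
  -- p^2 - n q^2 is an integer
  obtain ⟨zN, hzN⟩ : ∃ z : ℤ, (z:ℚ) = p^2 - n*q^2 := by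
    apply rat_int
    have := h1.mul h2
    rw [show ((p:ℝ) + (q:ℝ) * Real.sqrt n) * ((p:ℝ) - (q:ℝ) * Real.sqrt n)
        = ((p^2 - n*q^2 : ℚ):ℝ) by push_cast; linear_combination (-(q:ℝ)^2) * hs] at this
    exact this
  -- 2 q n is an integer
  obtain ⟨z2, hz2⟩ : ∃ z : ℤ, (z:ℚ) = 2*q*n := by
    apply rat_int
    have := ((h1.sub h2).mul (sqrt_int n))
    rw [show ((p:ℝ) + (q:ℝ) * Real.sqrt n - ((p:ℝ) - (q:ℝ) * Real.sqrt n)) * Real.sqrt n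
        = ((2*q*n : ℚ):ℝ) by push_cast; linear_combination (2*(q:ℝ)) * hs] at this
    exact this
  -- 4 q^2 n is an integer
  obtain ⟨z3, hz3⟩ : ∃ z : ℤ, (z:ℚ) = 4*q^2*n := by
    apply rat_int
    have := ((h1.sub h2).mul (h1.sub h2))
    rw [show ((p:ℝ) + (q:ℝ) * Real.sqrt n - ((p:ℝ) - (q:ℝ) * Real.sqrt n)) *
        ((p:ℝ) + (q:ℝ) * Real.sqrt n - ((p:ℝ) - (q:ℝ) * Real.sqrt n))
        = ((4*q^2*n : ℚ):ℝ) by push_cast; linear_combination (4*(q:ℝ)^2) * hs] at this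
    exact this
  -- n divides z2, and z2/n = 2q
  have hdvd : (n:ℤ) ∣ z2^2 := by
    refine ⟨z3, ?_⟩
    have : ((z2:ℚ))^2 = (n:ℚ) * (z3:ℚ) := by
      rw [hz2, hz3]; push_cast; ring
    exact_mod_cast this
  have hdvd2 : (n:ℤ) ∣ z2 := by
    rcases hn with h|h|h
    · rw [h] at hdvd ⊢; exact Int.prime_two.dvd_of_dvd_pow hdvd
    · rw [h] at hdvd ⊢; exact Int.prime_three.dvd_of_dvd_pow hdvd
    · rw [h] at hdvd ⊢
      have h2 : (2:ℤ) ∣ z2 := Int.prime_two.dvd_of_dvd_pow (dvd_trans ⟨3, by ring⟩ hdvd)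
      have h3 : (3:ℤ) ∣ z2 := Int.prime_three.dvd_of_dvd_pow (dvd_trans ⟨2, by ring⟩ hdvd)
      omega
  obtain ⟨k, hk⟩ := hdvd2
  have hnq : (n:ℚ) ≠ 0 := by
    rcases hn with h|h|h <;> rw [show (n:ℚ) = ((n:ℤ):ℚ) by push_cast; ring, h] <;> norm_num
  have hkq : (k:ℚ) = 2*q := by
    have : (n:ℚ) * (k:ℚ) = (n:ℚ) * (2*q) := by
      rw [show (n:ℚ) * (k:ℚ) = ((n * k : ℤ):ℚ) by push_cast; ring, ← hk, hz2]; ring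
    exact mul_left_cancel₀ hnq this
  -- mod 4
  have hmod : z1^2 - (n:ℤ)*k^2 = 4*zN := by
    have : ((z1:ℚ))^2 - (n:ℚ)*((k:ℚ))^2 = 4*(zN:ℚ) := by
      rw [hz1, hkq, hzN]; ring
    exact_mod_cast this
  obtain ⟨he1, he2⟩ := even_of_sq (n:ℤ) z1 k zN hn hmod
  refine ⟨z1/2, k/2, ?_, ?_⟩
  · have h2 : (2:ℚ) * ((z1/2 : ℤ):ℚ) = 2*p := by
      rw [show ((2:ℚ)) * ((z1/2 : ℤ):ℚ) = ((2*(z1/2) : ℤ):ℚ) by push_cast; ring,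
        show (2*(z1/2) : ℤ) = z1 by omega, hz1]
    linarith [h2]
  · have h2 : (2:ℚ) * ((k/2 : ℤ):ℚ) = 2*q := by
      rw [show ((2:ℚ)) * ((k/2 : ℤ):ℚ) = ((2*(k/2) : ℤ):ℚ) by push_cast; ring,
        show (2*(k/2) : ℤ) = k by omega, hkq]
    linarith [h2]

lemma emb_eq (s t : ℤ) (v : ℚ × ℚ × ℚ × ℚ) :
    emb 2 3 6 s t v = (v.1:ℝ) + (v.2.1:ℝ) * ((s:ℝ) * Real.sqrt 2)
      + (v.2.2.1:ℝ) * ((t:ℝ) * Real.sqrt 3)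
      + (v.2.2.2:ℝ) * (((s:ℝ) * Real.sqrt 2) * ((t:ℝ) * Real.sqrt 3)) := by
  unfold emb
  rw [show ((2:ℕ):ℝ) = 2 by norm_num, show ((3:ℕ):ℝ) = 3 by norm_num,
    show ((6:ℕ):ℝ) = 6 by norm_num, s6eq]
  ring

lemma emb_int (v : ℚ × ℚ × ℚ × ℚ) (h : IsIntegral ℤ (emb 2 3 6 1 1 v))
    (s t : ℤ) (hs : s = 1 ∨ s = -1) (ht : t = 1 ∨ t = -1) :
    IsIntegral ℤ (emb 2 3 6 s t v) := by
  rw [emb_eq] at h ⊢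
  have hs2 : ((s:ℝ) * Real.sqrt 2)^2 = 2 := by
    rcases hs with rfl|rfl <;> push_cast <;> nlinarith [sq2]
  have ht3 : ((t:ℝ) * Real.sqrt 3)^2 = 3 := by
    rcases ht with rfl|rfl <;> push_cast <;> nlinarith [sq3]
  apply conj_integral _ _ hs2 ht3
  simpa using h

lemma intK_struct (v : ℚ × ℚ × ℚ × ℚ) (h : IsIntegral ℤ (emb 2 3 6 1 1 v)) :
    ∃ A B C D : ℤ, v.1 = (A:ℚ) ∧ v.2.1 = (B:ℚ)/2 ∧ v.2.2.1 = (C:ℚ) ∧ v.2.2.2 = (D:ℚ)/2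
      ∧ (B - D) % 2 = 0 := by
  obtain ⟨a, b, c, d⟩ := v
  simp only at *
  have h11 := emb_int (a,b,c,d) h 1 1 (Or.inl rfl) (Or.inl rfl)
  have hm1 := emb_int (a,b,c,d) h (-1) 1 (Or.inr rfl) (Or.inl rfl)
  have h1m := emb_int (a,b,c,d) h 1 (-1) (Or.inl rfl) (Or.inr rfl)
  have hmm := emb_int (a,b,c,d) h (-1) (-1) (Or.inr rfl) (Or.inr rfl)
  have hs2 := sq2; have hs3 := sq3; have hs6 := s6eq
  have i1 : (((2*a : ℚ)):ℝ) + ((2*c : ℚ):ℝ) * Real.sqrt (3:ℕ)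
      = emb 2 3 6 1 1 (a,b,c,d) + emb 2 3 6 (-1) 1 (a,b,c,d) := by
    unfold emb; push_cast; ring
  have i2 : (((2*a : ℚ)):ℝ) - ((2*c : ℚ):ℝ) * Real.sqrt (3:ℕ)
      = emb 2 3 6 1 (-1) (a,b,c,d) + emb 2 3 6 (-1) (-1) (a,b,c,d) := by
    unfold emb; push_cast; ring
  have i3 : (((2*a : ℚ)):ℝ) + ((2*b : ℚ):ℝ) * Real.sqrt (2:ℕ)
      = emb 2 3 6 1 1 (a,b,c,d) + emb 2 3 6 1 (-1) (a,b,c,d) := by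
    unfold emb; push_cast; ring
  have i4 : (((2*a : ℚ)):ℝ) - ((2*b : ℚ):ℝ) * Real.sqrt (2:ℕ)
      = emb 2 3 6 (-1) 1 (a,b,c,d) + emb 2 3 6 (-1) (-1) (a,b,c,d) := by
    unfold emb; push_cast; ring
  have i5 : (((2*a : ℚ)):ℝ) + ((2*d : ℚ):ℝ) * Real.sqrt (6:ℕ)
      = emb 2 3 6 1 1 (a,b,c,d) + emb 2 3 6 (-1) (-1) (a,b,c,d) := by
    unfold emb; push_cast; ring
  have i6 : (((2*a : ℚ)):ℝ) - ((2*d : ℚ):ℝ) * Real.sqrt (6:ℕ)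
      = emb 2 3 6 1 (-1) (a,b,c,d) + emb 2 3 6 (-1) 1 (a,b,c,d) := by
    unfold emb; push_cast; ring
  have i7 : (((a^2+2*b^2-3*c^2-6*d^2 : ℚ)):ℝ) + ((2*a*b-6*c*d : ℚ):ℝ) * Real.sqrt (2:ℕ)
      = emb 2 3 6 1 1 (a,b,c,d) * emb 2 3 6 1 (-1) (a,b,c,d) := by
    unfold emb; push_cast; rw [hs6]
    linear_combination ((d:ℝ)^2*(Real.sqrt 3)^2 + (-1)*(b:ℝ)^2) * hs2 + ((2:ℝ)*(d:ℝ)^2 + 2*(c:ℝ)*(d:ℝ)*Real.sqrt 2 + (c:ℝ)^2) * hs3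
  have i8 : (((a^2+2*b^2-3*c^2-6*d^2 : ℚ)):ℝ) - ((2*a*b-6*c*d : ℚ):ℝ) * Real.sqrt (2:ℕ)
      = emb 2 3 6 (-1) 1 (a,b,c,d) * emb 2 3 6 (-1) (-1) (a,b,c,d) := by
    unfold emb; push_cast; rw [hs6]
    linear_combination ((d:ℝ)^2*(Real.sqrt 3)^2 + (-1)*(b:ℝ)^2) * hs2 + ((2:ℝ)*(d:ℝ)^2 + (-2)*(c:ℝ)*(d:ℝ)*Real.sqrt 2 + (c:ℝ)^2) * hs3
  have i9 : (((a^2+3*c^2-2*b^2-6*d^2 : ℚ)):ℝ) + ((2*a*c-4*b*d : ℚ):ℝ) * Real.sqrt (3:ℕ)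
      = emb 2 3 6 1 1 (a,b,c,d) * emb 2 3 6 (-1) 1 (a,b,c,d) := by
    unfold emb; push_cast; rw [hs6]
    linear_combination ((d:ℝ)^2*(Real.sqrt 3)^2 + 2*(b:ℝ)*(d:ℝ)*Real.sqrt 3 + (b:ℝ)^2) * hs2 + ((2:ℝ)*(d:ℝ)^2 + (-1)*(c:ℝ)^2) * hs3
  have i10 : (((a^2+3*c^2-2*b^2-6*d^2 : ℚ)):ℝ) - ((2*a*c-4*b*d : ℚ):ℝ) * Real.sqrt (3:ℕ)
      = emb 2 3 6 1 (-1) (a,b,c,d) * emb 2 3 6 (-1) (-1) (a,b,c,d) := by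
    unfold emb; push_cast; rw [hs6]
    linear_combination ((d:ℝ)^2*(Real.sqrt 3)^2 + (-2)*(b:ℝ)*(d:ℝ)*Real.sqrt 3 + (b:ℝ)^2) * hs2 + ((2:ℝ)*(d:ℝ)^2 + (-1)*(c:ℝ)^2) * hs3
  have i11 : (((a^2+6*d^2-2*b^2-3*c^2 : ℚ)):ℝ) + ((2*a*d-2*b*c : ℚ):ℝ) * Real.sqrt (6:ℕ)
      = emb 2 3 6 1 1 (a,b,c,d) * emb 2 3 6 (-1) (-1) (a,b,c,d) := by
    unfold emb; push_cast; rw [hs6]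
    linear_combination ((-1:ℝ)*(d:ℝ)^2*(Real.sqrt 3)^2 + (b:ℝ)^2) * hs2 + ((-2:ℝ)*(d:ℝ)^2 + (c:ℝ)^2) * hs3
  have i12 : (((a^2+6*d^2-2*b^2-3*c^2 : ℚ)):ℝ) - ((2*a*d-2*b*c : ℚ):ℝ) * Real.sqrt (6:ℕ)
      = emb 2 3 6 1 (-1) (a,b,c,d) * emb 2 3 6 (-1) 1 (a,b,c,d) := by
    unfold emb; push_cast; rw [hs6]
    linear_combination ((-1:ℝ)*(d:ℝ)^2*(Real.sqrt 3)^2 + (b:ℝ)^2) * hs2 + ((-2:ℝ)*(d:ℝ)^2 + (c:ℝ)^2) * hs3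
  obtain ⟨A2, C2, hA2, hC2⟩ := quadInt 3 (by norm_num) (2*a) (2*c)
    (by rw [i1]; exact h11.add hm1) (by rw [i2]; exact h1m.add hmm)
  obtain ⟨A2', B2, hA2', hB2⟩ := quadInt 2 (by norm_num) (2*a) (2*b)
    (by rw [i3]; exact h11.add h1m) (by rw [i4]; exact hm1.add hmm)
  obtain ⟨A2'', D2, hA2'', hD2⟩ := quadInt 6 (by norm_num) (2*a) (2*d)
    (by rw [i5]; exact h11.add hmm) (by rw [i6]; exact h1m.add hm1)
  obtain ⟨N1, Q1, hN1, hQ1⟩ := quadInt 2 (by norm_num) (a^2+2*b^2-3*c^2-6*d^2) (2*a*b-6*c*d)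
    (by rw [i7]; exact h11.mul h1m) (by rw [i8]; exact hm1.mul hmm)
  obtain ⟨N2, Q2, hN2, hQ2⟩ := quadInt 3 (by norm_num) (a^2+3*c^2-2*b^2-6*d^2) (2*a*c-4*b*d)
    (by rw [i9]; exact h11.mul hm1) (by rw [i10]; exact h1m.mul hmm)
  obtain ⟨N3, Q3, hN3, hQ3⟩ := quadInt 6 (by norm_num) (a^2+6*d^2-2*b^2-3*c^2) (2*a*d-2*b*c)
    (by rw [i11]; exact h11.mul hmm) (by rw [i12]; exact h1m.mul hm1)
  -- integer relations
  have e1 : A2^2 + 2*B2^2 - 3*C2^2 - 6*D2^2 = 4*N1 := by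
    have : ((A2:ℚ))^2 + 2*(B2:ℚ)^2 - 3*(C2:ℚ)^2 - 6*(D2:ℚ)^2 = 4*(N1:ℚ) := by
      rw [hA2, hB2, hC2, hD2, hN1]; ring
    exact_mod_cast this
  have e2 : A2^2 + 3*C2^2 - 2*B2^2 - 6*D2^2 = 4*N2 := by
    have : ((A2:ℚ))^2 + 3*(C2:ℚ)^2 - 2*(B2:ℚ)^2 - 6*(D2:ℚ)^2 = 4*(N2:ℚ) := by
      rw [hA2, hB2, hC2, hD2, hN2]; ring
    exact_mod_cast this
  have e3 : A2^2 + 6*D2^2 - 2*B2^2 - 3*C2^2 = 4*N3 := by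
    have : ((A2:ℚ))^2 + 6*(D2:ℚ)^2 - 2*(B2:ℚ)^2 - 3*(C2:ℚ)^2 = 4*(N3:ℚ) := by
      rw [hA2, hB2, hC2, hD2, hN3]; ring
    exact_mod_cast this
  -- parity
  obtain ⟨ma, hma⟩ := sq_mod4 A2
  obtain ⟨mb, hmb⟩ := sq_mod4 B2
  obtain ⟨mc, hmc⟩ := sq_mod4 C2
  obtain ⟨md, hmd⟩ := sq_mod4 D2
  have hpar : A2 % 2 = 0 ∧ C2 % 2 = 0 ∧ (B2 - D2) % 2 = 0 := by
    rcases hma with ⟨u1,u2⟩|⟨u1,u2⟩ <;> rcases hmb with ⟨v1,v2⟩|⟨v1,v2⟩ <;>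
      rcases hmc with ⟨w1,w2⟩|⟨w1,w2⟩ <;> rcases hmd with ⟨x1,x2⟩|⟨x1,x2⟩ <;>
      rw [u2, v2, w2, x2] at e1 e2 e3 <;> omega
  refine ⟨A2/2, B2, C2/2, D2, ?_, ?_, ?_, ?_, hpar.2.2⟩
  · have h2 : (2:ℚ) * ((A2/2 : ℤ):ℚ) = 2*a := by
      rw [show ((2:ℚ)) * ((A2/2 : ℤ):ℚ) = ((2*(A2/2) : ℤ):ℚ) by push_cast; ring,
        show (2*(A2/2) : ℤ) = A2 by omega, hA2]
    linarith
  · linarith [hB2]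
  · have h2 : (2:ℚ) * ((C2/2 : ℤ):ℚ) = 2*c := by
      rw [show ((2:ℚ)) * ((C2/2 : ℤ):ℚ) = ((2*(C2/2) : ℤ):ℚ) by push_cast; ring,
        show (2*(C2/2) : ℤ) = C2 by omega, hC2]
    linarith
  · linarith [hD2]


lemma emb_add (s t : ℤ) (x y : ℚ × ℚ × ℚ × ℚ) :
    emb 2 3 6 s t (x + y) = emb 2 3 6 s t x + emb 2 3 6 s t y := by
  unfold emb
  simp only [Prod.fst_add, Prod.snd_add]
  push_cast
  ring

lemma w_int : IsIntegral ℤ ((Real.sqrt 2 + Real.sqrt 6)/2) := by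
  refine ⟨X^4 - 4*X^2 + 1, ?_, ?_⟩
  · have h : (X^4 - 4*X^2 + 1 : ℤ[X]) = X^4 + (-(4*X^2) + 1) := by ring
    rw [h]
    apply Polynomial.monic_X_pow_add
    have hd : (-(4*X^2)+1 : ℤ[X]).degree ≤ 2 := by compute_degree
    refine lt_of_le_of_lt hd (by norm_num)
  · have hs2 := sq2; have hs3 := sq3
    simp only [Polynomial.eval₂_add, Polynomial.eval₂_sub, Polynomial.eval₂_mul,
      Polynomial.eval₂_pow, Polynomial.eval₂_X, Polynomial.eval₂_one, Polynomial.eval₂_ofNat]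
    rw [s6eq]
    linear_combination ((-7/8:ℝ) + (-3/2)*Real.sqrt 3 + (-1/4)*(Real.sqrt 3)^2 + (1/2)*(Real.sqrt 3)^3
        + (1/8)*(Real.sqrt 3)^4 + (Real.sqrt 2)^2*((1/16:ℝ) + (1/4)*Real.sqrt 3 + (3/8)*(Real.sqrt 3)^2
        + (1/4)*(Real.sqrt 3)^3 + (1/16)*(Real.sqrt 3)^4)) * hs2
      + ((1/4:ℝ) + Real.sqrt 3 + (1/4)*(Real.sqrt 3)^2) * hs3

lemma const_int (z : ℤ) : IsIntegral ℤ ((z:ℝ)) := by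
  refine ⟨X - C z, Polynomial.monic_X_sub_C z, by simp⟩

lemma zeta_int : IsIntK 2 3 6 (3, -1/2, -1, 1/2) := by
  unfold IsIntK
  have h : emb 2 3 6 1 1 (3, -1/2, -1, 1/2)
      = (((3:ℤ):ℝ) - Real.sqrt 2 - Real.sqrt 3) + (Real.sqrt 2 + Real.sqrt 6)/2 := by
    unfold emb; push_cast; ring
  rw [h]
  exact (((const_int 3).sub (by
      have := sqrt_int 2; rwa [show ((2:ℕ):ℝ) = 2 by norm_num] at this)).sub (by
      have := sqrt_int 3; rwa [show ((3:ℕ):ℝ) = 3 by norm_num] at this)).add w_int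

lemma mem_sgn (s : ℤ) (hs : s ∈ Sgn) : s = 1 ∨ s = -1 := hs

lemma zeta_pos : TotPos 2 3 6 (3, -1/2, -1, 1/2) := by
  intro s hs t ht
  unfold emb
  rcases mem_sgn s hs with rfl|rfl <;> rcases mem_sgn t ht with rfl|rfl <;>
    push_cast <;> norm_num <;>
    nlinarith [s2lb, s2ub, s3lb, s3ub, s6lb, s6ub]

lemma zeta_norm : emb 2 3 6 1 1 (3, -1/2, -1, 1/2) * emb 2 3 6 (-1) 1 (3, -1/2, -1, 1/2)
      * emb 2 3 6 1 (-1) (3, -1/2, -1, 1/2) * emb 2 3 6 (-1) (-1) (3, -1/2, -1, 1/2) = 25 := by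
  have hs2 := sq2; have hs3 := sq3
  unfold emb
  push_cast
  rw [s6eq]
  norm_num
  linear_combination ((-35/8:ℝ) + (3/4)*(Real.sqrt 3)^2 + (-3/8)*(Real.sqrt 3)^4
      + (Real.sqrt 2)^2*((1/16:ℝ) + (-1/8)*(Real.sqrt 3)^2 + (1/16)*(Real.sqrt 3)^4)) * hs2
    + ((-63/4:ℝ) + (1/4)*(Real.sqrt 3)^2) * hs3

set_option maxHeartbeats 2000000 in
theorem stmt_16 :
    TotPos 2 3 6 (3, -1/2, -1, 1/2) ∧
    IsIntK 2 3 6 (3, -1/2, -1, 1/2) ∧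
    emb 2 3 6 1 1 (3, -1/2, -1, 1/2) * emb 2 3 6 (-1) 1 (3, -1/2, -1, 1/2)
      * emb 2 3 6 1 (-1) (3, -1/2, -1, 1/2) * emb 2 3 6 (-1) (-1) (3, -1/2, -1, 1/2) = 25 ∧
    Indec 2 3 6 (3, -1/2, -1, 1/2) := by
  refine ⟨zeta_pos, zeta_int, zeta_norm, zeta_pos, zeta_int, ?_⟩
  rintro ⟨β, γ, hβint, hγint, hβpos, hγpos, hsum⟩
  obtain ⟨A, B, C, D, e1, e2, e3, e4, hpar⟩ := intK_struct β hβint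
  have hβeq : β = ((A:ℚ), (B:ℚ)/2, (C:ℚ), (D:ℚ)/2) := by
    obtain ⟨b1, b2, b3, b4⟩ := β
    simp only at e1 e2 e3 e4
    rw [e1, e2, e3, e4]
  have h1 : (1:ℤ) ∈ Sgn := Or.inl rfl
  have hm : (-1:ℤ) ∈ Sgn := Or.inr rfl
  -- lower bounds
  have L11 := hβpos 1 h1 1 h1
  have Lm1 := hβpos (-1) hm 1 h1
  have L1m := hβpos 1 h1 (-1) hm
  have Lmm := hβpos (-1) hm (-1) hm
  -- upper bounds
  have key : ∀ s ∈ Sgn, ∀ t ∈ Sgn, emb 2 3 6 s t β < emb 2 3 6 s t (3, -1/2, -1, 1/2) := by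
    intro s hs t ht
    have hadd := emb_add s t β γ
    rw [hsum] at hadd
    have := hγpos s hs t ht
    linarith
  have U11 := key 1 h1 1 h1
  have Um1 := key (-1) hm 1 h1
  have U1m := key 1 h1 (-1) hm
  have Umm := key (-1) hm (-1) hm
  rw [hβeq] at L11 Lm1 L1m Lmm U11 Um1 U1m Umm
  unfold emb at L11 Lm1 L1m Lmm U11 Um1 U1m Umm
  push_cast at L11 Lm1 L1m Lmm U11 Um1 U1m Umm
  have hs2l := s2lb; have hs2u := s2ub; have hs3l := s3lb; have hs3u := s3ub
  have hs6l := s6lb; have hs6u := s6ub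
  -- bounds on A
  have hA1 : (1:ℤ) ≤ A := by
    have : (0:ℝ) < 4*(A:ℝ) := by linarith
    have : (0:ℝ) < (A:ℝ) := by linarith
    have : (0:ℤ) < A := by exact_mod_cast this
    omega
  have hA2 : A ≤ 2 := by
    have : (4:ℝ)*(A:ℝ) < 12 := by linarith
    have : (A:ℝ) < 3 := by linarith
    have : A < 3 := by exact_mod_cast this
    omega
  -- bounds on C : from A + C√3 ∈ (0, 3 - √3)
  have hCr1 : (0:ℝ) < (A:ℝ) + (C:ℝ) * Real.sqrt 3 := by linarith
  have hCr2 : (A:ℝ) + (C:ℝ) * Real.sqrt 3 < 3 - Real.sqrt 3 := by linarith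
  have hC1 : -1 ≤ C := by
    have hAr : (A:ℝ) ≤ 2 := by exact_mod_cast hA2
    have : (-2:ℝ) < (C:ℝ) := by nlinarith
    have : (-2:ℤ) < C := by exact_mod_cast this
    omega
  have hC2 : C ≤ 0 := by
    have hAr : (1:ℝ) ≤ (A:ℝ) := by exact_mod_cast hA1
    have : (C:ℝ) < 1 := by nlinarith
    have : C < 1 := by exact_mod_cast this
    omega
  -- bounds on B : from A + (B/2)√2 ∈ (0, 3 - √2/2) and A - (B/2)√2 ∈ (0, 3 + √2/2)
  have hB1 : -3 ≤ B := by
    have hAr : (A:ℝ) ≤ 2 := by exact_mod_cast hA2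
    have : (-4:ℝ) < (B:ℝ) := by nlinarith
    have : -4 < B := by exact_mod_cast this
    omega
  have hB2 : B ≤ 1 := by
    have hAr : (1:ℝ) ≤ (A:ℝ) := by exact_mod_cast hA1
    have : (B:ℝ) < 2 := by nlinarith
    have : B < 2 := by exact_mod_cast this
    omega
  -- bounds on D : from A - (D/2)√6 ∈ (0, 3 - √6/2) and A + (D/2)√6 ∈ (0, 3 + √6/2)
  have hD1 : 0 ≤ D := by
    have hAr : (A:ℝ) ≤ 2 := by exact_mod_cast hA2
    have : (-1:ℝ) < (D:ℝ) := by nlinarith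
    have : -1 < D := by exact_mod_cast this
    omega
  have hD2 : D ≤ 1 := by
    have hAr : (1:ℝ) ≤ (A:ℝ) := by exact_mod_cast hA1
    have : (D:ℝ) < 2 := by nlinarith
    have : D < 2 := by exact_mod_cast this
    omega
  interval_cases A <;> interval_cases C <;> interval_cases D <;> interval_cases B <;>
    first
      | omega
      | (push_cast at L11 Lm1 L1m Lmm U11 Um1 U1m Umm; linarith)
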